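/- arXiv:2205.05274 — 3 statements merged into one kernel-verified Lean document; each statement's English description precedes it below -/
import Mathlib

section
/- Let G be a connected finite simple graph with at least 3 vertices and let F_n be the fan graph obtained by joining a single vertex to every vertex of the path P_n, where n ≥ 3. Then γ_{P,c}(G □ F_n) ≤ 2·γ_c(G). -/
open SimpleGraph

variable {V : Type*} {α β : Type*}

/-- The monitored set `M(S)`: least set containing the closed neighborhood of `S`
and closed under the propagation rule (a monitored vertex all of whose neighbors,
except possibly one, are monitored forces that remaining neighbor). -/
inductive Monitored (G : SimpleGraph V) (S : Set V) : V → Prop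
  | mem : ∀ {v}, v ∈ S → Monitored G S v
  | dom : ∀ {v w}, v ∈ S → G.Adj v w → Monitored G S w
  | prop : ∀ {v w}, Monitored G S v → G.Adj v w →
      (∀ u, G.Adj v u → u ≠ w → Monitored G S u) → Monitored G S w

/-- `S` is a power dominating set of `G`. -/
def IsPDS (G : SimpleGraph V) (S : Set V) : Prop := ∀ v, Monitored G S v

/-- `S` is a connected power dominating set of `G`. -/
def IsCPDS (G : SimpleGraph V) (S : Set V) : Prop :=
  IsPDS G S ∧ (G.induce S).Connected

/-- The connected power domination number `γ_{P,c}(G)`. -/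
noncomputable def cpdn (G : SimpleGraph V) : ℕ :=
  sInf {n | ∃ S : Finset V, S.card = n ∧ IsCPDS G (S : Set V)}

/-- Zero-forcing: least set containing `Z` closed under the color-change rule. -/
inductive Forced (G : SimpleGraph V) (Z : Set V) : V → Prop
  | mem : ∀ {v}, v ∈ Z → Forced G Z v
  | force : ∀ {v w}, Forced G Z v → G.Adj v w →
      (∀ u, G.Adj v u → u ≠ w → Forced G Z u) → Forced G Z w

/-- `Z` is a zero forcing set of `G`. -/
def IsZFS (G : SimpleGraph V) (Z : Set V) : Prop := ∀ v, Forced G Z v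

/-- `Z` is a connected zero forcing set of `G`. -/
def IsCZFS (G : SimpleGraph V) (Z : Set V) : Prop :=
  IsZFS G Z ∧ (G.induce Z).Connected

/-- The connected zero forcing number `Z_c(G)`. -/
noncomputable def czfn (G : SimpleGraph V) : ℕ :=
  sInf {n | ∃ Z : Finset V, Z.card = n ∧ IsCZFS G (Z : Set V)}

/-- `S` is a dominating set of `G`: `N[S] = V(G)`. -/
def IsDomSet (G : SimpleGraph V) (S : Set V) : Prop :=
  ∀ v, ∃ u ∈ S, u = v ∨ G.Adj u v

/-- `S` is a connected dominating set of `G`. -/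
def IsCDS (G : SimpleGraph V) (S : Set V) : Prop :=
  IsDomSet G S ∧ (G.induce S).Connected

/-- The domination number `γ(G)`. -/
noncomputable def domNum (G : SimpleGraph V) : ℕ :=
  sInf {n | ∃ S : Finset V, S.card = n ∧ IsDomSet G (S : Set V)}

/-- The connected domination number `γ_c(G)`. -/
noncomputable def cdomNum (G : SimpleGraph V) : ℕ :=
  sInf {n | ∃ S : Finset V, S.card = n ∧ IsCDS G (S : Set V)}

/-- The lexicographic product `G ∘ H`. -/
def lexProd (G : SimpleGraph α) (H : SimpleGraph β) : SimpleGraph (α × β) where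
  Adj x y := G.Adj x.1 y.1 ∨ (x.1 = y.1 ∧ H.Adj x.2 y.2)
  symm := by
    constructor
    rintro ⟨a, b⟩ ⟨c, d⟩ (h | ⟨h1, h2⟩)
    · exact Or.inl h.symm
    · exact Or.inr ⟨h1.symm, h2.symm⟩
  loopless := by
    constructor
    rintro ⟨a, b⟩ (h | ⟨-, h⟩)
    · exact G.loopless.irrefl a h
    · exact H.loopless.irrefl b h

/-- The tensor (direct) product `G × H`. -/
def tensorProd (G : SimpleGraph α) (H : SimpleGraph β) : SimpleGraph (α × β) where
  Adj x y := G.Adj x.1 y.1 ∧ H.Adj x.2 y.2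
  symm := ⟨fun _ _ ⟨h1, h2⟩ => ⟨h1.symm, h2.symm⟩⟩
  loopless := ⟨fun x ⟨h1, _⟩ => G.loopless.irrefl x.1 h1⟩

/-- A vertex `v` is universal in `G`. -/
def IsUniversal (G : SimpleGraph V) (v : V) : Prop := ∀ w, w ≠ v → G.Adj v w

/-- The join of a single vertex (`none`) with the graph `G` (on `some` vertices). -/
def coneGraph (G : SimpleGraph α) : SimpleGraph (Option α) where
  Adj x y := match x, y with
    | none, none => False
    | none, some _ => True
    | some _, none => True
    | some a, some b => G.Adj a b
  symm := by constructor; rintro (_ | a) (_ | b) h <;> first | trivial | exact h.symm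
  loopless := by constructor; rintro (_ | a) h <;> first | trivial | exact G.loopless.irrefl a h

/-- The wheel `W_n`: the join of a single vertex with the cycle `C_n`. -/
def wheelGraph (n : ℕ) : SimpleGraph (Option (Fin n)) := coneGraph (cycleGraph n)

/-- The fan `F_n`: the join of a single vertex with the path `P_n`. -/
def fanGraph (n : ℕ) : SimpleGraph (Option (Fin n)) := coneGraph (pathGraph n)

lemma fan_adj_none_some {n : ℕ} (j : Fin n) : (fanGraph n).Adj none (some j) := trivial

lemma fan_adj_some_none {n : ℕ} (j : Fin n) : (fanGraph n).Adj (some j) none := trivial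

lemma fan_adj_some_some {n : ℕ} {i j : Fin n} (h : (pathGraph n).Adj i j) :
    (fanGraph n).Adj (some i) (some j) := h

lemma fan_adj_some_some' {n : ℕ} {i j : Fin n} (h : (fanGraph n).Adj (some i) (some j)) :
    (pathGraph n).Adj i j := h

/-- `γ_{P,c}(G □ F_n) ≤ 2·γ_c(G)`. -/
theorem stmt_8 {α : Type*} [Fintype α]
    (G : SimpleGraph α) (hG : G.Connected)
    (hGcard : 3 ≤ Fintype.card α)
    (n : ℕ) (hn : 3 ≤ n) :
    cpdn (G □ fanGraph n) ≤ 2 * cdomNum G := by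
  classical
  -- the set defining `cdomNum G` is nonempty (take all vertices)
  have hne : {m | ∃ S : Finset α, S.card = m ∧ IsCDS G (S : Set α)}.Nonempty := by
    refine ⟨(Finset.univ : Finset α).card, Finset.univ, rfl, ?_, ?_⟩
    · intro v; exact ⟨v, by simp, Or.inl rfl⟩
    · rw [Finset.coe_univ]
      exact (induceUnivIso G).connected_iff.mpr hG
  obtain ⟨D, hDcard, hDdom, hDconn⟩ :
      ∃ D : Finset α, D.card = cdomNum G ∧ IsDomSet G ↑D ∧ (G.induce (↑D : Set α)).Connected := by
    obtain ⟨D, h1, h2, h3⟩ := Nat.sInf_mem hne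
    exact ⟨D, h1, h2, h3⟩
  set j0 : Fin n := ⟨0, by omega⟩ with hj0
  set Z : Finset (α × Option (Fin n)) := D ×ˢ ({none, some j0} : Finset (Option (Fin n))) with hZ
  have memZ : ∀ (a : α) (x : Option (Fin n)),
      (a, x) ∈ (↑Z : Set (α × Option (Fin n))) ↔ a ∈ D ∧ (x = none ∨ x = some j0) := by
    intro a x
    simp [hZ]
  -- layer `none` is monitored
  have hnone : ∀ g : α, Monitored (G □ fanGraph n) ↑Z (g, none) := by
    intro g
    obtain ⟨d, hd, heq | hadj⟩ := hDdom g
    · subst heq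
      exact Monitored.mem ((memZ d none).mpr ⟨hd, Or.inl rfl⟩)
    · exact Monitored.dom ((memZ d none).mpr ⟨hd, Or.inl rfl⟩) (Or.inl ⟨hadj, rfl⟩)
  -- all layers `some j` are monitored, by strong induction on `j`
  have hsome : ∀ k : ℕ, ∀ j : Fin n, j.val = k → ∀ g : α,
      Monitored (G □ fanGraph n) ↑Z (g, some j) := by
    intro k
    induction k using Nat.strong_induction_on with
    | _ k IH =>
      intro j hj g
      match k, hj with
      | 0, hj =>
        have hjj : j = j0 := Fin.ext (by simp [hj0, hj])
        subst hjj
        obtain ⟨d, hd, heq | hadj⟩ := hDdom g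
        · subst heq
          exact Monitored.mem ((memZ d (some j0)).mpr ⟨hd, Or.inr rfl⟩)
        · exact Monitored.dom ((memZ d (some j0)).mpr ⟨hd, Or.inr rfl⟩) (Or.inl ⟨hadj, rfl⟩)
      | (m + 1), hj =>
        have hmn : m < n := by omega
        set j' : Fin n := ⟨m, hmn⟩ with hj'
        have hmon' : Monitored (G □ fanGraph n) ↑Z (g, some j') :=
          IH m (Nat.lt_succ_self m) j' rfl g
        refine Monitored.prop hmon' ?_ ?_
        · exact Or.inr ⟨fan_adj_some_some (pathGraph_adj.mpr (Or.inl (by simp [hj', hj]))), rfl⟩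
        · rintro ⟨u1, u2⟩ hadj hneq
          rcases hadj with ⟨hGadj, h2⟩ | ⟨hFadj, h1⟩
          · simp only at h2
            rw [← h2]
            exact IH m (Nat.lt_succ_self m) j' rfl u1
          · simp only at h1 hFadj
            subst h1
            match u2 with
            | none => exact hnone g
            | some m' =>
              have hpa := pathGraph_adj.mp (fan_adj_some_some' hFadj)
              rcases hpa with h | h
              · -- m'.val = m + 1 = j.val, so u = (g, some j), contradiction
                exfalso
                apply hneq
                have hh : m + 1 = (m' : ℕ) := h
                have : m' = j := Fin.ext (by omega)
                rw [this]
              · -- m' + 1 = m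
                have hh : (m' : ℕ) + 1 = m := h
                exact IH m'.val (by omega) m' rfl g
  have hPDS : IsPDS (G □ fanGraph n) ↑Z := by
    rintro ⟨g, _ | j⟩
    · exact hnone g
    · exact hsome j.val j rfl g
  -- D is nonempty
  have hαne : Nonempty α := Fintype.card_pos_iff.mp (by omega)
  obtain ⟨v0⟩ := hαne
  obtain ⟨d0, hd0, -⟩ := hDdom v0
  -- connectivity of the induced graph on Z
  have hconn : ((G □ fanGraph n).induce (↑Z : Set (α × Option (Fin n)))).Connected := by
    have hmemnone : ∀ a ∈ D, (a, (none : Option (Fin n))) ∈ (↑Z : Set (α × Option (Fin n))) :=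
      fun a ha => (memZ a none).mpr ⟨ha, Or.inl rfl⟩
    -- homomorphism from `G.induce D` into the induced graph, sending `d` to `(d, none)`
    let f : G.induce (↑D : Set α) →g (G □ fanGraph n).induce (↑Z : Set (α × Option (Fin n))) :=
      ⟨fun x => ⟨(x.1, none), hmemnone x.1 x.2⟩, fun hab => Or.inl ⟨hab, rfl⟩⟩
    have hmid : ∀ (a b : α) (ha : a ∈ D) (hb : b ∈ D),
        ((G □ fanGraph n).induce (↑Z : Set (α × Option (Fin n)))).Reachable
          ⟨(a, none), hmemnone a ha⟩ ⟨(b, none), hmemnone b hb⟩ := by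
      intro a b ha hb
      exact (hDconn.preconnected ⟨a, ha⟩ ⟨b, hb⟩).map f
    have hstep : ∀ (p : α × Option (Fin n)) (hp : p ∈ (↑Z : Set (α × Option (Fin n)))),
        ∃ hpd : p.1 ∈ D,
        ((G □ fanGraph n).induce (↑Z : Set (α × Option (Fin n)))).Reachable
          ⟨p, hp⟩ ⟨(p.1, none), hmemnone p.1 hpd⟩ := by
      rintro ⟨a, x⟩ hp
      obtain ⟨ha, hx⟩ := (memZ a x).mp hp
      refine ⟨ha, ?_⟩
      rcases hx with rfl | rfl
      · exact Reachable.refl _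
      · exact Adj.reachable (Or.inr ⟨fan_adj_some_none j0, rfl⟩)
    rw [connected_iff]
    refine ⟨?_, ⟨⟨(d0, none), hmemnone d0 hd0⟩⟩⟩
    intro p q
    obtain ⟨p, hp⟩ := p
    obtain ⟨q, hq⟩ := q
    obtain ⟨hpd, hpr⟩ := hstep p hp
    obtain ⟨hqd, hqr⟩ := hstep q hq
    exact hpr.trans ((hmid p.1 q.1 hpd hqd).trans hqr.symm)
  -- cardinality
  have hcard : Z.card = 2 * cdomNum G := by
    rw [hZ, Finset.card_product]
    have h2 : ({none, some j0} : Finset (Option (Fin n))).card = 2 := by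
      rw [Finset.card_insert_of_notMem (by simp), Finset.card_singleton]
    rw [h2, hDcard, mul_comm]
  exact Nat.sInf_le ⟨Z, hcard, hPDS, hconn⟩
end

section
/- For integers 2 ≤ m ≤ n, the connected power domination number of the Cartesian product of complete graphs satisfies γ_{P,c}(K_m □ K_n) = m − 1. -/
open SimpleGraph

variable {V : Type*} {α β : Type*}

/-- `γ_{P,c}(K_m □ K_n) = m - 1` for `2 ≤ m ≤ n`. -/
theorem stmt_9 (m n : ℕ) (hm : 2 ≤ m) (hmn : m ≤ n) :
    cpdn ((⊤ : SimpleGraph (Fin m)) □ (⊤ : SimpleGraph (Fin n))) = m - 1 := by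
  haveI : NeZero m := ⟨by omega⟩
  haveI : NeZero n := ⟨by omega⟩
  set G := (⊤ : SimpleGraph (Fin m)) □ (⊤ : SimpleGraph (Fin n)) with hGdef
  have hGadj : ∀ x y : Fin m × Fin n,
      G.Adj x y ↔ (x.1 ≠ y.1 ∧ x.2 = y.2) ∨ (x.2 ≠ y.2 ∧ x.1 = y.1) := by
    intro x y; simp [hGdef, boxProd_adj]
  set L : Fin m := ⟨m - 1, by omega⟩ with hL
  have h0L : (0 : Fin m) ≠ L := by
    intro h
    have := congrArg Fin.val h
    simp [hL, Fin.val_zero] at this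
    omega
  set S : Finset (Fin m × Fin n) :=
    (Finset.univ.erase L).image (fun i => (i, (0 : Fin n))) with hSdef
  have hScard : S.card = m - 1 := by
    rw [hSdef, Finset.card_image_of_injective _
        (fun a b h => by simpa using congrArg Prod.fst h),
      Finset.card_erase_of_mem (Finset.mem_univ _), Finset.card_univ, Fintype.card_fin]
  have hmemS : ∀ i : Fin m, i ≠ L → (i, (0 : Fin n)) ∈ (S : Set (Fin m × Fin n)) := by
    intro i hi
    simp only [hSdef, Finset.coe_image, Set.mem_image, Finset.mem_coe,
      Finset.mem_erase]
    exact ⟨i, ⟨hi, Finset.mem_univ i⟩, rfl⟩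
  have hmemS' : ∀ v : Fin m × Fin n, v ∈ (S : Set (Fin m × Fin n)) →
      v.1 ≠ L ∧ v.2 = 0 := by
    intro v hv
    simp only [hSdef, Finset.coe_image, Set.mem_image, Finset.mem_coe,
      Finset.mem_erase] at hv
    obtain ⟨i, ⟨hi, -⟩, rfl⟩ := hv
    exact ⟨hi, rfl⟩
  -- monitoring vertices not in row L
  have hmon : ∀ (a : Fin m) (b : Fin n), a ≠ L → Monitored G (S : Set _) (a, b) := by
    intro a b ha
    by_cases hb : b = 0
    · subst hb; exact Monitored.mem (hmemS a ha)
    · exact Monitored.dom (hmemS a ha)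
        ((hGadj _ _).mpr (Or.inr ⟨fun h => hb h.symm, rfl⟩))
  have hmonL : ∀ b : Fin n, Monitored G (S : Set _) (L, b) := by
    intro b
    refine Monitored.prop (hmon 0 b h0L) ((hGadj _ _).mpr (Or.inl ⟨h0L, rfl⟩)) ?_
    rintro ⟨a', b'⟩ hadj hne
    rcases (hGadj _ _).mp hadj with ⟨h1, h2⟩ | ⟨h1, h2⟩
    · -- same column: b' = b, a' ≠ 0
      simp only at h1 h2
      subst h2
      by_cases hA : a' = L
      · exact absurd (by rw [hA]) hne
      · exact hmon a' b hA
    · simp only at h1 h2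
      subst h2
      exact hmon 0 b' h0L
  have hPDS : IsPDS G (S : Set _) := by
    rintro ⟨a, b⟩
    by_cases ha : a = L
    · subst ha; exact hmonL b
    · exact hmon a b ha
  have hconn : (G.induce (S : Set _)).Connected := by
    haveI : Nonempty (S : Set (Fin m × Fin n)) := ⟨⟨(0, 0), hmemS 0 h0L⟩⟩
    apply SimpleGraph.Connected.mk
    · intro x y
      by_cases hxy : x = y
      · subst hxy; exact SimpleGraph.Reachable.refl x
      · apply SimpleGraph.Adj.reachable
        obtain ⟨hx1, hx2⟩ := hmemS' _ x.2
        obtain ⟨hy1, hy2⟩ := hmemS' _ y.2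
        have hfst : (x : Fin m × Fin n).1 ≠ (y : Fin m × Fin n).1 := by
          intro h
          apply hxy
          apply Subtype.ext
          exact Prod.ext h (by rw [hx2, hy2])
        exact (hGadj _ _).mpr (Or.inl ⟨hfst, hx2.trans hy2.symm⟩)
  -- lower bound
  have hlow : ∀ T : Finset (Fin m × Fin n), IsCPDS G (T : Set _) → m - 1 ≤ T.card := by
    intro T hT
    by_contra hlt
    push_neg at hlt
    set R := T.image Prod.fst with hR
    set C := T.image Prod.snd with hC
    have hRc : R.card ≤ T.card := Finset.card_image_le
    have hCc : C.card ≤ T.card := Finset.card_image_le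
    have hmemT : ∀ v : Fin m × Fin n, v ∈ (T : Set _) → v.1 ∈ R ∧ v.2 ∈ C := by
      intro v hv
      exact ⟨Finset.mem_image_of_mem _ hv, Finset.mem_image_of_mem _ hv⟩
    have hfresh : ∀ (k : ℕ) (F : Finset (Fin k)), F.card < k → ∃ r : Fin k, r ∉ F := by
      intro k F hF
      by_contra h
      push_neg at h
      have : (Finset.univ : Finset (Fin k)) ⊆ F := fun r _ => h r
      have := Finset.card_le_card this
      simp [Finset.card_univ] at this
      omega
    have key : ∀ v, Monitored G (T : Set _) v → v.1 ∈ R ∨ v.2 ∈ C := by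
      intro v hv
      induction hv with
      | mem h => exact Or.inl (hmemT _ h).1
      | @dom v w h hadj =>
        rcases (hGadj _ _).mp hadj with ⟨h1, h2⟩ | ⟨h1, h2⟩
        · exact Or.inr (h2 ▸ (hmemT _ h).2)
        · exact Or.inl (h2 ▸ (hmemT _ h).1)
      | @prop v w hv hadj hothers ihv ihothers =>
        by_contra hw
        push_neg at hw
        obtain ⟨hw1, hw2⟩ := hw
        rcases (hGadj _ _).mp hadj with ⟨h1, h2⟩ | ⟨h1, h2⟩
        · -- same column: v.2 = w.2 ∉ C, so v.1 ∈ R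
          have hv1 : v.1 ∈ R := by
            rcases ihv with h | h
            · exact h
            · exact absurd (h2 ▸ h) hw2
          obtain ⟨r, hr⟩ := hfresh m (insert w.1 R) (by
            calc (insert w.1 R).card ≤ R.card + 1 := Finset.card_insert_le _ _
              _ < m := by omega)
          rw [Finset.mem_insert] at hr
          push_neg at hr
          obtain ⟨hrw, hrR⟩ := hr
          have hrv : r ≠ v.1 := fun h => hrR (h ▸ hv1)
          have hadjvu : G.Adj v (r, v.2) :=
            (hGadj _ _).mpr (Or.inl ⟨fun h => hrv h.symm, rfl⟩)
          have hneq : (r, v.2) ≠ w := fun h => hrw (congrArg Prod.fst h)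
          rcases ihothers _ hadjvu hneq with h | h
          · exact hrR h
          · exact hw2 (h2 ▸ h)
        · -- same row: v.1 = w.1 ∉ R, so v.2 ∈ C
          have hv2 : v.2 ∈ C := by
            rcases ihv with h | h
            · exact absurd (h2 ▸ h) hw1
            · exact h
          obtain ⟨c, hc⟩ := hfresh n (insert w.2 C) (by
            calc (insert w.2 C).card ≤ C.card + 1 := Finset.card_insert_le _ _
              _ < n := by omega)
          rw [Finset.mem_insert] at hc
          push_neg at hc
          obtain ⟨hcw, hcC⟩ := hc
          have hcv : c ≠ v.2 := fun h => hcC (h ▸ hv2)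
          have hadjvu : G.Adj v (v.1, c) :=
            (hGadj _ _).mpr (Or.inr ⟨fun h => hcv h.symm, rfl⟩)
          have hneq : (v.1, c) ≠ w := fun h => hcw (congrArg Prod.snd h)
          rcases ihothers _ hadjvu hneq with h | h
          · exact hw1 (h2 ▸ h)
          · exact hcC h
    obtain ⟨a, ha⟩ := hfresh m R (by omega)
    obtain ⟨b, hb⟩ := hfresh n C (by omega)
    rcases key (a, b) (hT.1 (a, b)) with h | h
    · exact ha h
    · exact hb h
  have hmem : m - 1 ∈ {k | ∃ S' : Finset (Fin m × Fin n),
      S'.card = k ∧ IsCPDS G (S' : Set _)} := ⟨S, hScard, hPDS, hconn⟩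
  apply le_antisymm
  · exact Nat.sInf_le hmem
  · apply le_csInf ⟨_, hmem⟩
    rintro k ⟨T, rfl, hT⟩
    exact hlow T hT
end

section
/- For integers m, n ≥ 3, the connected power domination number of the Cartesian product of the complete graph K_m with the star K_{1,n} satisfies γ_{P,c}(K_m □ K_{1,n}) = min{m − 1, n}. -/
open SimpleGraph

variable {V : Type*} {α β : Type*}

abbrev VV (m n : ℕ) := Fin (m+3) × (Fin 1 ⊕ Fin (n+3))
abbrev GG (m n : ℕ) : SimpleGraph (VV m n) :=
  (⊤ : SimpleGraph (Fin (m+3))) □ completeBipartiteGraph (Fin 1) (Fin (n+3))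

variable {m n : ℕ}

lemma gg_adj (x y : VV m n) :
    (GG m n).Adj x y ↔ (x.1 ≠ y.1 ∧ x.2 = y.2) ∨
      (x.1 = y.1 ∧ (x.2.isLeft ∧ y.2.isRight ∨ x.2.isRight ∧ y.2.isLeft)) := by
  simp only [GG, boxProd_adj, top_adj, completeBipartiteGraph_adj]
  tauto

lemma adj_row (i : Fin (m+3)) (a : Fin 1) (j : Fin (n+3)) :
    (GG m n).Adj (i, Sum.inl a) (i, Sum.inr j) := by
  rw [gg_adj]; simp

lemma adj_col {i i' : Fin (m+3)} (h : i ≠ i') (b : Fin 1 ⊕ Fin (n+3)) :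
    (GG m n).Adj (i, b) (i', b) := by
  rw [gg_adj]; exact Or.inl ⟨h, rfl⟩

lemma adj_inl_elim {i : Fin (m+3)} {a : Fin 1} {u : VV m n}
    (h : (GG m n).Adj (i, Sum.inl a) u) :
    (∃ i', i' ≠ i ∧ u = (i', Sum.inl a)) ∨ (∃ j, u = (i, Sum.inr j)) := by
  obtain ⟨i', b'⟩ := u
  rw [gg_adj] at h
  rcases h with ⟨h1, h2⟩ | ⟨h1, h2 | h2⟩ <;> dsimp only at h1 h2
  · exact Or.inl ⟨i', fun e => h1 e.symm, by rw [← h2]⟩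
  · rcases b' with a' | j
    · simp at h2
    · exact Or.inr ⟨j, by rw [h1]⟩
  · simp at h2

lemma adj_inr_elim {i : Fin (m+3)} {j : Fin (n+3)} {u : VV m n}
    (h : (GG m n).Adj (i, Sum.inr j) u) :
    (∃ i', i' ≠ i ∧ u = (i', Sum.inr j)) ∨ u = (i, Sum.inl 0) := by
  obtain ⟨i', b'⟩ := u
  rw [gg_adj] at h
  rcases h with ⟨h1, h2⟩ | ⟨h1, h2 | h2⟩ <;> dsimp only at h1 h2
  · exact Or.inl ⟨i', fun e => h1 e.symm, by rw [← h2]⟩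
  · simp at h2
  · rcases b' with a' | j'
    · exact Or.inr (by rw [← h1, Fin.eq_zero a'])
    · simp at h2

def S1 (m n : ℕ) : Finset (VV m n) :=
  Finset.image (fun i : Fin (m+2) => ((Fin.castLE (by omega) i : Fin (m+3)), Sum.inl 0)) Finset.univ

def S2 (m n : ℕ) : Finset (VV m n) :=
  insert ((0 : Fin (m+3)), Sum.inl 0)
    (Finset.image
      (fun j : Fin (n+2) => ((0 : Fin (m+3)), Sum.inr (Fin.castLE (by omega) j : Fin (n+3))))
      Finset.univ)

lemma mem_S1 {x : VV m n} : x ∈ S1 m n ↔ x.1.val < m + 2 ∧ x.2 = Sum.inl 0 := by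
  simp only [S1, Finset.mem_image, Finset.mem_univ, true_and]
  constructor
  · rintro ⟨i, rfl⟩; exact ⟨i.isLt, rfl⟩
  · obtain ⟨x1, x2⟩ := x
    rintro ⟨h1, rfl⟩
    exact ⟨⟨x1.val, h1⟩, by ext <;> simp⟩

lemma mem_S2 {x : VV m n} :
    x ∈ S2 m n ↔ x.1 = 0 ∧ (x.2 = Sum.inl 0 ∨ ∃ j : Fin (n+3), j.val < n + 2 ∧ x.2 = Sum.inr j) := by
  simp only [S2, Finset.mem_insert, Finset.mem_image, Finset.mem_univ, true_and]
  obtain ⟨x1, x2⟩ := x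
  constructor
  · rintro (h | ⟨j, h⟩) <;> rw [Prod.ext_iff] at h
    · exact ⟨h.1, Or.inl h.2⟩
    · exact ⟨h.1.symm, Or.inr ⟨_, j.isLt, h.2.symm⟩⟩
  · rintro ⟨rfl, rfl | ⟨j, hj, rfl⟩⟩
    · exact Or.inl rfl
    · exact Or.inr ⟨⟨j.val, hj⟩, by ext <;> simp⟩

lemma card_S1 : (S1 m n).card = m + 2 := by
  rw [S1, Finset.card_image_of_injective _ (fun a b h => by
    simpa [Fin.ext_iff, Prod.ext_iff] using h)]
  simp

lemma card_S2 : (S2 m n).card = n + 3 := by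
  rw [S2, Finset.card_insert_of_notMem (by simp), Finset.card_image_of_injective _
    (fun a b h => by simpa [Fin.ext_iff, Prod.ext_iff] using h)]
  simp

lemma pds_S1 : IsPDS (GG m n) ↑(S1 m n) := by
  have hc : ∀ i : Fin (m+3), Monitored (GG m n) ↑(S1 m n) (i, Sum.inl 0) := by
    intro i
    by_cases h : i.val < m + 2
    · exact .mem (mem_S1.2 ⟨h, rfl⟩)
    · refine .dom (mem_S1.2 ⟨by simp, rfl⟩) (adj_col (i := (0 : Fin (m+3))) ?_ _)
      intro e; rw [← e] at h; simp at h
  have hl : ∀ (i : Fin (m+3)), i.val < m + 2 → ∀ j, Monitored (GG m n) ↑(S1 m n) (i, Sum.inr j) :=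
    fun i h j => .dom (mem_S1.2 ⟨h, rfl⟩) (adj_row i 0 j)
  rintro ⟨i, b | j⟩
  · rw [Fin.eq_zero b]; exact hc i
  · by_cases h : i.val < m + 2
    · exact hl i h j
    · have hi : i.val = m + 2 := by omega
      have h0 : (0 : Fin (m+3)) ≠ i := fun e => by rw [← e] at hi; simp at hi
      refine .prop (hl 0 (by simp) j) (adj_col h0 _) ?_
      intro u hadj hne
      rcases adj_inr_elim hadj with ⟨i', hi', rfl⟩ | rfl
      · by_cases h' : i'.val < m + 2
        · exact hl i' h' j
        · have : i' = i := Fin.ext (by omega)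
          exact absurd (by rw [this]) hne
      · exact hc 0

lemma pds_S2 : IsPDS (GG m n) ↑(S2 m n) := by
  have hc : ∀ i : Fin (m+3), Monitored (GG m n) ↑(S2 m n) (i, Sum.inl 0) := by
    intro i
    by_cases h : i = 0
    · exact .mem (mem_S2.2 ⟨h, Or.inl rfl⟩)
    · exact .dom (mem_S2.2 ⟨rfl, Or.inl rfl⟩) (adj_col (Ne.symm h) _)
  have hl : ∀ (i : Fin (m+3)) (j : Fin (n+3)), j.val < n + 2 →
      Monitored (GG m n) ↑(S2 m n) (i, Sum.inr j) := by
    intro i j hj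
    by_cases h : i = 0
    · exact .mem (mem_S2.2 ⟨h, Or.inr ⟨j, hj, rfl⟩⟩)
    · exact .dom (mem_S2.2 ⟨rfl, Or.inr ⟨j, hj, rfl⟩⟩) (adj_col (Ne.symm h) _)
  rintro ⟨i, b | j⟩
  · rw [Fin.eq_zero b]; exact hc i
  · by_cases h : j.val < n + 2
    · exact hl i j h
    · refine .prop (hc i) (adj_row i 0 j) ?_
      intro u hadj hne
      rcases adj_inl_elim hadj with ⟨i', hi', rfl⟩ | ⟨j', rfl⟩
      · exact hc i'
      · refine hl i j' ?_
        have : j' ≠ j := fun e => hne (by rw [e])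
        have : j'.val ≠ j.val := fun e => this (Fin.ext e)
        omega

lemma conn_S1 : ((GG m n).induce ↑(S1 m n)).Connected := by
  rw [connected_iff]
  refine ⟨?_, ⟨⟨((0 : Fin (m+3)), Sum.inl 0), mem_S1.2 ⟨by simp, rfl⟩⟩⟩⟩
  intro u v
  by_cases h : u = v
  · exact h ▸ Reachable.refl u
  · refine Adj.reachable ?_
    show (GG m n).Adj ↑u ↑v
    obtain ⟨⟨u1, u2⟩, hu⟩ := u
    obtain ⟨⟨v1, v2⟩, hv⟩ := v
    obtain ⟨hu1, hu2⟩ := mem_S1.1 hu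
    obtain ⟨hv1, hv2⟩ := mem_S1.1 hv
    dsimp only at hu2 hv2 ⊢
    subst hu2 hv2
    refine adj_col (fun e => h (Subtype.ext ?_)) _
    show (u1, (Sum.inl 0 : Fin 1 ⊕ Fin (n+3))) = (v1, Sum.inl 0)
    rw [e]

lemma conn_S2 : ((GG m n).induce ↑(S2 m n)).Connected := by
  rw [connected_iff]
  have hcm : ((0 : Fin (m+3)), (Sum.inl 0 : Fin 1 ⊕ Fin (n+3))) ∈ S2 m n := mem_S2.2 ⟨rfl, Or.inl rfl⟩
  refine ⟨?_, ⟨⟨_, hcm⟩⟩⟩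
  have key : ∀ u : ↥(↑(S2 m n) : Set (VV m n)),
      ((GG m n).induce ↑(S2 m n)).Reachable u ⟨_, hcm⟩ := by
    rintro ⟨⟨u1, u2⟩, hu⟩
    obtain ⟨hu1, hu2 | ⟨j, hj, hu2⟩⟩ := mem_S2.1 hu
    · dsimp only at hu1 hu2; subst hu1 hu2; exact Reachable.refl _
    · dsimp only at hu1 hu2; subst hu1 hu2
      refine Adj.reachable ?_
      show (GG m n).Adj _ _
      exact ((adj_row 0 0 j).symm : (GG m n).Adj (0, Sum.inr j) (0, Sum.inl 0))
  intro u v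
  exact (key u).trans (key v).symm

lemma walk_invariant {W : Type*} {γ : Type*} {G : SimpleGraph W} {f : W → γ}
    (hf : ∀ ⦃u v⦄, G.Adj u v → f u = f v) {u v : W} (h : G.Reachable u v) : f u = f v := by
  obtain ⟨p⟩ := h
  induction p with
  | nil => rfl
  | cons h p ih => exact (hf h).trans ih

lemma lower_bound (S : Finset (VV m n)) (h : IsCPDS (GG m n) ↑S) :
    min (m + 2) (n + 3) ≤ S.card := by
  classical
  by_contra hlt
  push_neg at hlt
  rw [lt_min_iff] at hlt
  obtain ⟨hcm, hcn⟩ := hlt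
  set A : Finset (Fin (m+3)) := Finset.univ.filter (fun i => (i, Sum.inl 0) ∈ S) with hAdef
  set J : Finset (Fin (n+3)) := Finset.univ.filter (fun j => ∃ i, (i, Sum.inr j) ∈ S) with hJdef
  -- cardinality of A plus J is at most card S
  have hsum : A.card + J.card ≤ S.card := by
    have hdisj : Disjoint (A.image (Sum.inl : _ → Fin (m+3) ⊕ Fin (n+3))) (J.image Sum.inr) := by
      rw [Finset.disjoint_left]
      rintro x hx hx'
      rw [Finset.mem_image] at hx hx'
      obtain ⟨y, _, rfl⟩ := hx
      obtain ⟨y', _, hy'⟩ := hx'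
      exact absurd hy' (by simp)
    have hsub : A.image Sum.inl ∪ J.image Sum.inr ⊆
        S.image (fun p : VV m n =>
          Sum.elim (fun _ => (Sum.inl p.1 : Fin (m+3) ⊕ Fin (n+3))) (fun j => Sum.inr j) p.2) := by
      intro x hx
      rw [Finset.mem_union] at hx
      rcases hx with hx | hx <;> rw [Finset.mem_image] at hx <;> obtain ⟨y, hy, rfl⟩ := hx
      · exact Finset.mem_image.2 ⟨(y, Sum.inl 0), (Finset.mem_filter.1 hy).2, rfl⟩
      · obtain ⟨i, hi⟩ := (Finset.mem_filter.1 hy).2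
        exact Finset.mem_image.2 ⟨(i, Sum.inr y), hi, rfl⟩
    calc A.card + J.card
        = (A.image Sum.inl ∪ J.image Sum.inr).card := by
          rw [Finset.card_union_of_disjoint hdisj,
            Finset.card_image_of_injective _ Sum.inl_injective,
            Finset.card_image_of_injective _ Sum.inr_injective]
      _ ≤ _ := le_trans (Finset.card_le_card hsub) Finset.card_image_le
  have hAcard : A.card ≤ m + 1 := by omega
  have hJcard : J.card ≤ n + 1 := by
    rcases A.eq_empty_or_nonempty with hAe | hAne
    · -- no center vertices in S; connectivity forces all of S in one leaf column
      have hone : ∀ j ∈ J, ∀ j' ∈ J, j = j' := by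
        intro j hj j' hj'
        obtain ⟨i, hi⟩ := (Finset.mem_filter.1 hj).2
        obtain ⟨i', hi'⟩ := (Finset.mem_filter.1 hj').2
        have hreach := h.2.preconnected ⟨(i, Sum.inr j), Finset.mem_coe.2 hi⟩
          ⟨(i', Sum.inr j'), Finset.mem_coe.2 hi'⟩
        have hf : ∀ ⦃u v : ↥(↑S : Set (VV m n))⦄, ((GG m n).induce ↑S).Adj u v →
            (↑u : VV m n).2 = (↑v : VV m n).2 := by
          have hnl : ∀ (i₁ : Fin (m+3)) (a : Fin 1), (i₁, Sum.inl a) ∉ S := by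
            intro i₁ a hmem
            have : i₁ ∈ A := Finset.mem_filter.2 ⟨Finset.mem_univ _,
              by rwa [Fin.eq_zero a] at hmem⟩
            rw [hAe] at this
            simp at this
          rintro ⟨⟨u1, bu | ju⟩, hu⟩ ⟨⟨v1, bv | jv⟩, hv⟩ hadj
          · exact absurd (Finset.mem_coe.1 hu) (hnl _ _)
          · exact absurd (Finset.mem_coe.1 hu) (hnl _ _)
          · exact absurd (Finset.mem_coe.1 hv) (hnl _ _)
          · have : (GG m n).Adj (u1, Sum.inr ju) (v1, Sum.inr jv) := hadj
            rw [gg_adj] at this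
            rcases this with ⟨_, h2⟩ | ⟨_, h2 | h2⟩
            · exact h2
            · simp at h2
            · simp at h2
        have := walk_invariant hf hreach
        simpa using this
      have : J.card ≤ 1 := Finset.card_le_one.2 (fun a ha b hb => hone a ha b hb)
      omega
    · have : 1 ≤ A.card := Finset.card_pos.2 hAne
      omega
  -- fresh elements
  have freshA : ∀ i : Fin (m+3), ∃ i', i' ∉ A ∧ i' ≠ i := by
    intro i
    by_contra hco
    push_neg at hco
    have hsub : (Finset.univ : Finset (Fin (m+3))) ⊆ insert i A := by
      intro x _
      by_cases hx : x ∈ A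
      · exact Finset.mem_insert_of_mem hx
      · rw [hco x hx]; exact Finset.mem_insert_self _ _
    have h1 := Finset.card_le_card hsub
    rw [Finset.card_univ, Fintype.card_fin] at h1
    have h2 := Finset.card_insert_le i A
    omega
  have freshJ : ∀ j : Fin (n+3), ∃ j', j' ∉ J ∧ j' ≠ j := by
    intro j
    by_contra hco
    push_neg at hco
    have hsub : (Finset.univ : Finset (Fin (n+3))) ⊆ insert j J := by
      intro x _
      by_cases hx : x ∈ J
      · exact Finset.mem_insert_of_mem hx
      · rw [hco x hx]; exact Finset.mem_insert_self _ _
    have h1 := Finset.card_le_card hsub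
    rw [Finset.card_univ, Fintype.card_fin] at h1
    have h2 := Finset.card_insert_le j J
    omega
  -- the stuck monitored superset
  set M0 : Set (VV m n) :=
    {p | (∃ a, p.2 = Sum.inl a) ∨ (∃ j, p.2 = Sum.inr j ∧ j ∈ J) ∨ p.1 ∈ A} with hM0
  have hnotM0 : ∀ p : VV m n, p ∉ M0 → ∃ i j, p = (i, Sum.inr j) ∧ i ∉ A ∧ j ∉ J := by
    rintro ⟨i, b | j⟩ hp
    · exact absurd (Or.inl ⟨b, rfl⟩) hp
    · exact ⟨i, j, rfl, fun hc => hp (Or.inr (Or.inr hc)),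
        fun hc => hp (Or.inr (Or.inl ⟨j, rfl, hc⟩))⟩
  have hmon : ∀ v, Monitored (GG m n) ↑S v → v ∈ M0 := by
    intro v hv
    induction hv with
    | @mem v hmem =>
      obtain ⟨i, b | j⟩ := v
      · exact Or.inl ⟨b, rfl⟩
      · exact Or.inr (Or.inl ⟨j, rfl,
          Finset.mem_filter.2 ⟨Finset.mem_univ _, ⟨i, Finset.mem_coe.1 hmem⟩⟩⟩)
    | @dom v w hmem hadj =>
      obtain ⟨i, b | j⟩ := v
      · rcases adj_inl_elim hadj with ⟨i', _, rfl⟩ | ⟨j, rfl⟩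
        · exact Or.inl ⟨b, rfl⟩
        · refine Or.inr (Or.inr ?_)
          refine Finset.mem_filter.2 ⟨Finset.mem_univ _, ?_⟩
          rwa [Fin.eq_zero b] at hmem
      · rcases adj_inr_elim hadj with ⟨i', _, rfl⟩ | rfl
        · exact Or.inr (Or.inl ⟨j, rfl,
            Finset.mem_filter.2 ⟨Finset.mem_univ _, ⟨i, Finset.mem_coe.1 hmem⟩⟩⟩)
        · exact Or.inl ⟨0, rfl⟩
    | @prop v w hv hadj hall ihv ihall =>
      by_contra hw
      obtain ⟨iw, jw, rfl, hiwA, hjwJ⟩ := hnotM0 w hw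
      rcases adj_inr_elim hadj.symm with ⟨i', hi', hveq⟩ | hveq
      · subst hveq
        rcases ihv with ⟨a, ha⟩ | ⟨j, hj, hjJ⟩ | hA'
        · simp at ha
        · obtain rfl : jw = j := by simpa using hj
          exact hjwJ hjJ
        · obtain ⟨i'', hi''A, hi''ne⟩ := freshA iw
          have hne2 : i'' ≠ i' := fun e => hi''A (e ▸ hA')
          have hu := ihall (i'', Sum.inr jw) (adj_col (Ne.symm hne2) _)
            (fun e => hi''ne (congrArg Prod.fst e))
          rcases hu with ⟨a, ha⟩ | ⟨j, hj, hjJ⟩ | hA2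
          · simp at ha
          · obtain rfl : jw = j := by simpa using hj
            exact hjwJ hjJ
          · exact hi''A hA2
      · subst hveq
        obtain ⟨j', hj'J, hj'ne⟩ := freshJ jw
        have hu := ihall (iw, Sum.inr j') (adj_row iw 0 j')
          (fun e => hj'ne (Sum.inr.inj (congrArg Prod.snd e)))
        rcases hu with ⟨a, ha⟩ | ⟨j, hj, hjJ⟩ | hA2
        · simp at ha
        · obtain rfl : j' = j := by simpa using hj
          exact hj'J hjJ
        · exact hiwA hA2
  obtain ⟨i0, hi0, -⟩ := freshA 0
  obtain ⟨j0, hj0, -⟩ := freshJ 0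
  rcases hmon (i0, Sum.inr j0) (h.1 _) with ⟨a, ha⟩ | ⟨j, hj, hjJ⟩ | hA2
  · simp at ha
  · obtain rfl : j0 = j := by simpa using hj
    exact hj0 hjJ
  · exact hi0 hA2


/-- `γ_{P,c}(K_m □ K_{1,n}) = min{m - 1, n}` for `m, n ≥ 3`. -/
theorem stmt_10 (m n : ℕ) (hm : 3 ≤ m) (hn : 3 ≤ n) :
    cpdn ((⊤ : SimpleGraph (Fin m)) □ completeBipartiteGraph (Fin 1) (Fin n)) =
      min (m - 1) n := by
  obtain ⟨m', rfl⟩ : ∃ k, m = k + 3 := ⟨m - 3, by omega⟩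
  obtain ⟨n', rfl⟩ : ∃ k, n = k + 3 := ⟨n - 3, by omega⟩
  have hT : min (m' + 2) (n' + 3) ∈
      {k | ∃ Z : Finset (VV m' n'), Z.card = k ∧ IsCPDS (GG m' n') ↑Z} := by
    rcases le_total (m' + 2) (n' + 3) with hle | hle
    · exact ⟨S1 m' n', by rw [card_S1]; omega, pds_S1, conn_S1⟩
    · exact ⟨S2 m' n', by rw [card_S2]; omega, pds_S2, conn_S2⟩
  have key : cpdn (GG m' n') = min (m' + 2) (n' + 3) := by
    apply le_antisymm
    · exact Nat.sInf_le hT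
    · obtain ⟨Z, hZcard, hZ⟩ := Nat.sInf_mem (⟨_, hT⟩ : Set.Nonempty _)
      exact le_of_le_of_eq (lower_bound Z hZ) hZcard
  have harith : m' + 3 - 1 = m' + 2 := rfl
  rw [harith]
  exact key
end
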